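/- Every cycle, i.e., every multigraph whose underlying simple graph is a cycle and all of whose multiedges have multiplicity 1, is Mengerian for time. -/

import Mathlib

/-- A (finite, loopless) multigraph: a vertex type, an edge type, and an
endpoints function assigning to each edge an unordered pair of distinct vertices. -/
structure Multigraph where
  V : Type
  E : Type
  fintypeV : Fintype V
  decEqV : DecidableEq V
  fintypeE : Fintype E
  decEqE : DecidableEq E
  ends : E → Sym2 V
  loopless : ∀ e, ¬ (ends e).IsDiag

attribute [instance] Multigraph.fintypeV Multigraph.decEqV Multigraph.fintypeE Multigraph.decEqE

/-- A temporal `s,z`-path in the temporal graph `(G, lam)`: an alternating sequence of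
pairwise distinct vertices and edges, starting at `s`, ending at `z`, whose edges appear
at non-decreasing timesteps. -/
structure TPath (G : Multigraph) (lam : G.E → ℕ) (s z : G.V) where
  verts : List G.V
  edges : List G.E
  len_eq : verts.length = edges.length + 1
  head_eq : verts.head? = some s
  last_eq : verts.getLast? = some z
  nodup : verts.Nodup
  ends_eq : ∀ (i : ℕ) (h : i < edges.length),
      G.ends (edges.get ⟨i, h⟩) = s(verts.get ⟨i, by omega⟩, verts.get ⟨i + 1, by omega⟩)
  mono : List.Chain' (· ≤ ·) (edges.map lam)

/-- The set of timesteps at which a temporal path is active. -/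
def TPath.times {G : Multigraph} {lam : G.E → ℕ} {s z : G.V} (P : TPath G lam s z) : Set ℕ :=
  {t | ∃ e ∈ P.edges, lam e = t}

/-- Two temporal `s,z`-paths are snapshot disjoint if they are not both active at any
common timestep. -/
def SnapDisjoint {G : Multigraph} {lam : G.E → ℕ} {s z : G.V} (P Q : TPath G lam s z) : Prop :=
  P.times ∩ Q.times = ∅

/-- A set `S` of timesteps is a snapshot `s,z`-cut if every temporal `s,z`-path uses an
edge active at some timestep in `S`. -/
def IsSnapCut (G : Multigraph) (lam : G.E → ℕ) (s z : G.V) (S : Set ℕ) : Prop :=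
  ∀ P : TPath G lam s z, ∃ e ∈ P.edges, lam e ∈ S

/-- `maxD G lam s z`: the maximum number of pairwise snapshot disjoint temporal `s,z`-paths. -/
noncomputable def maxD (G : Multigraph) (lam : G.E → ℕ) (s z : G.V) : ℕ :=
  sSup {k | ∃ f : Fin k → TPath G lam s z, ∀ i j, i ≠ j → SnapDisjoint (f i) (f j)}

/-- `minC G lam s z`: the minimum size of a snapshot `s,z`-cut. -/
noncomputable def minC (G : Multigraph) (lam : G.E → ℕ) (s z : G.V) : ℕ :=
  sInf {h | ∃ S : Finset ℕ, S.card = h ∧ IsSnapCut G lam s z ↑S}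

/-- A proper timefunction: each edge is active at a positive timestep, and no two parallel
edges are active at the same timestep. -/
def ProperTime (G : Multigraph) (lam : G.E → ℕ) : Prop :=
  (∀ e, 0 < lam e) ∧ ∀ e f, e ≠ f → G.ends e = G.ends f → lam e ≠ lam f

/-- `G` is Mengerian for time: for every proper timefunction and every pair of distinct
vertices, the maximum number of pairwise snapshot disjoint temporal `s,z`-paths equals the
minimum size of a snapshot `s,z`-cut. -/
def Mengerian (G : Multigraph) : Prop :=
  ∀ lam : G.E → ℕ, ProperTime G lam → ∀ s z : G.V, s ≠ z →
    maxD G lam s z = minC G lam s z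

/-- `H` is a subgraph of `G` (up to isomorphism): `H` embeds into `G`. -/
def IsSubgraph (H G : Multigraph) : Prop :=
  ∃ (fv : H.V → G.V) (fe : H.E → G.E),
    Function.Injective fv ∧ Function.Injective fe ∧
    ∀ e, G.ends (fe e) = (H.ends e).map fv

/-- The m-subdivision of the multiedge `xy` of `G`: delete all edges between `x` and `y`,
add a new vertex (`none`), and join it to each of `x` and `y` by as many parallel edges as
there were between `x` and `y`. -/
def Multigraph.msubdiv (G : Multigraph) (x y : G.V) : Multigraph where
  V := Option G.V
  E := {e : G.E // G.ends e ≠ s(x, y)} ⊕ ({e : G.E // G.ends e = s(x, y)} × Bool)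
  fintypeV := inferInstance
  decEqV := inferInstance
  fintypeE := inferInstance
  decEqE := inferInstance
  ends := fun t =>
    match t with
    | .inl e => (G.ends e.1).map some
    | .inr (_, true) => s(some x, (none : Option G.V))
    | .inr (_, false) => s((none : Option G.V), some y)
  loopless := by
    rintro (⟨e, he⟩ | ⟨e, b⟩)
    · simpa [Sym2.isDiag_map (Option.some_injective _)] using G.loopless e
    · cases b <;> simp [Sym2.mk_isDiag_iff]

/-- Isomorphism of multigraphs. -/
def MIso (G H : Multigraph) : Prop :=
  ∃ (fv : G.V ≃ H.V) (fe : G.E ≃ H.E), ∀ e, H.ends (fe e) = (G.ends e).map fv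

/-- `B` is obtained from `A` by m-subdividing one of its multiedges. -/
def SubdivStep (A B : Multigraph) : Prop :=
  ∃ x y : A.V, (∃ e, A.ends e = s(x, y)) ∧ MIso (A.msubdiv x y) B

/-- `H` is an m-topological minor of `G`: some subgraph of `G` can be obtained from `H` by
a sequence of m-subdivisions. -/
def IsMTopMinor (H G : Multigraph) : Prop :=
  ∃ K, Relation.ReflTransGen SubdivStep H K ∧ IsSubgraph K G

/-- The multigraph obtained from `G` by keeping only the edges satisfying `P`. -/
def Multigraph.restrictE (G : Multigraph) (P : G.E → Prop) [DecidablePred P] : Multigraph where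
  V := G.V
  E := {e : G.E // P e}
  fintypeV := G.fintypeV
  decEqV := G.decEqV
  fintypeE := inferInstance
  decEqE := inferInstance
  ends := fun e => G.ends e.1
  loopless := fun e => G.loopless e.1

/-- The underlying simple graph of a multigraph. -/
def Multigraph.simple (G : Multigraph) : SimpleGraph G.V where
  Adj u v := ∃ e, G.ends e = s(u, v)
  symm := ⟨by
    rintro u v ⟨e, he⟩
    exact ⟨e, by rw [he, Sym2.eq_swap]⟩⟩
  loopless := ⟨by
    rintro u ⟨e, he⟩
    exact G.loopless e (by rw [he]; exact Sym2.mk_isDiag_iff.2 rfl)⟩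


section CycleHelpers

lemma list_get_idx_congr {α : Type*} (l : List α) {i j : ℕ} (h : i = j) (hi : i < l.length) :
    l.get ⟨i, hi⟩ = l.get ⟨j, h ▸ hi⟩ := by subst h; rfl

lemma list_get_list_congr {α : Type*} {l m : List α} (h : l = m) {i : ℕ} (hi : i < l.length) :
    l.get ⟨i, hi⟩ = m.get ⟨i, h ▸ hi⟩ := by subst h; rfl

lemma list_get_zero' {α : Type*} {l : List α} {a : α} (h : 0 < l.length)
    (hs : l.head? = some a) : l.get ⟨0, h⟩ = a := by
  cases l with
  | nil => simp at h
  | cons b t => simpa using hs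

lemma list_get_last' {α : Type*} {l : List α} {a : α} (h : l.length - 1 < l.length)
    (hz : l.getLast? = some a) : l.get ⟨l.length - 1, h⟩ = a := by
  have hne : l ≠ [] := by rintro rfl; simp at h
  rw [List.getLast?_eq_getLast_of_ne_nil hne, Option.some_inj] at hz
  rw [← hz, List.getLast_eq_getElem]
  rfl

variable {G : Multigraph} {lam : G.E → ℕ} {s z : G.V}

lemma TPath.verts_ne_nil (P : TPath G lam s z) : P.verts ≠ [] := by
  have := P.len_eq
  intro h; rw [h] at this; simp at this

lemma TPath.length_pos (P : TPath G lam s z) : 0 < P.verts.length := by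
  have := P.len_eq; omega

lemma TPath.get_zero (P : TPath G lam s z) : P.verts.get ⟨0, P.length_pos⟩ = s :=
  list_get_zero' _ P.head_eq

lemma TPath.get_last (P : TPath G lam s z)
    (h : P.verts.length - 1 < P.verts.length) :
    P.verts.get ⟨P.verts.length - 1, h⟩ = z :=
  list_get_last' _ P.last_eq

lemma TPath.two_le_length (hsz : s ≠ z) (P : TPath G lam s z) : 2 ≤ P.verts.length := by
  by_contra h
  have h1 : P.verts.length = 1 := by have := P.length_pos; omega
  exact hsz (P.get_zero.symm.trans
    ((list_get_idx_congr _ (by omega : 0 = P.verts.length - 1) _).trans (P.get_last (by omega))))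

lemma TPath.edges_ne_nil (hsz : s ≠ z) (P : TPath G lam s z) : P.edges ≠ [] := by
  have h2 := P.two_le_length hsz
  have := P.len_eq
  intro h; rw [h] at this; simp at this; omega

lemma TPath.times_nonempty (hsz : s ≠ z) (P : TPath G lam s z) : ∃ t, t ∈ P.times := by
  obtain ⟨e, he⟩ := List.exists_mem_of_ne_nil _ (P.edges_ne_nil hsz)
  exact ⟨lam e, e, he, rfl⟩

lemma TPath.adj_of_idx (P : TPath G lam s z) (i : ℕ) (h : i + 1 < P.verts.length) :
    G.simple.Adj (P.verts.get ⟨i, by omega⟩) (P.verts.get ⟨i + 1, h⟩) := by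
  have hi : i < P.edges.length := by have := P.len_eq; omega
  exact ⟨P.edges.get ⟨i, hi⟩, P.ends_eq i hi⟩

/-- A vertex at a non-final index is not `z`. -/
lemma TPath.get_ne_last (P : TPath G lam s z) {i : ℕ} (hi : i + 1 < P.verts.length) :
    P.verts.get ⟨i, by omega⟩ ≠ z := by
  intro he
  have hl := P.get_last (by omega)
  have hinj := List.nodup_iff_injective_get.mp P.nodup
  have heq : (⟨i, by omega⟩ : Fin P.verts.length) = ⟨P.verts.length - 1, by omega⟩ :=
    hinj (he.trans hl.symm)
  have : i = P.verts.length - 1 := congrArg Fin.val heq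
  omega

/-- In a graph of maximum degree 2, a temporal path is determined by its second vertex. -/
lemma TPath.verts_eq_of_second (hsz : s ≠ z)
    (hdeg : ∀ v a b c : G.V, G.simple.Adj v a → G.simple.Adj v b → G.simple.Adj v c →
      a = b ∨ a = c ∨ b = c)
    (P Q : TPath G lam s z)
    (h2 : P.verts.get ⟨1, by have := P.two_le_length hsz; omega⟩ =
          Q.verts.get ⟨1, by have := Q.two_le_length hsz; omega⟩) :
    P.verts = Q.verts := by
  have hP2 := P.two_le_length hsz
  have hQ2 := Q.two_le_length hsz
  have key : ∀ k : ℕ, (k < P.verts.length ↔ k < Q.verts.length) ∧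
      ∀ (hP : k < P.verts.length) (hQ : k < Q.verts.length),
        P.verts.get ⟨k, hP⟩ = Q.verts.get ⟨k, hQ⟩ := by
    intro k
    induction k using Nat.strong_induction_on with
    | _ k ih =>
      match k with
      | 0 =>
        exact ⟨by omega, fun hP hQ => P.get_zero.trans Q.get_zero.symm⟩
      | 1 =>
        exact ⟨by omega, fun hP hQ => h2⟩
      | (j + 2) =>
        obtain ⟨ij, vj⟩ := ih j (by omega)
        obtain ⟨ij1, vj1⟩ := ih (j + 1) (by omega)
        have hiff : (j + 2 < P.verts.length ↔ j + 2 < Q.verts.length) := by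
          constructor
          · intro hk
            by_contra hq
            have hQj1 : j + 1 < Q.verts.length := (ij1.mp (by omega))
            have hvz : Q.verts.get ⟨j + 1, hQj1⟩ = z :=
              (list_get_idx_congr _ (by omega : j + 1 = Q.verts.length - 1) _).trans
                (Q.get_last (by omega))
            exact P.get_ne_last (i := j + 1) (by omega)
              ((vj1 (by omega) hQj1).trans hvz)
          · intro hk
            by_contra hq
            have hPj1 : j + 1 < P.verts.length := (ij1.mpr (by omega))
            have hvz : P.verts.get ⟨j + 1, hPj1⟩ = z :=
              (list_get_idx_congr _ (by omega : j + 1 = P.verts.length - 1) _).trans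
                (P.get_last (by omega))
            exact Q.get_ne_last (i := j + 1) (by omega)
              ((vj1 hPj1 (by omega)).symm.trans hvz)
        refine ⟨hiff, fun hP hQ => ?_⟩
        have hPj1 : j + 1 < P.verts.length := by omega
        have hQj1 : j + 1 < Q.verts.length := by omega
        have hu := vj (by omega) (by omega)
        have hv := vj1 hPj1 hQj1
        have hadjPu : G.simple.Adj (P.verts.get ⟨j + 1, hPj1⟩) (P.verts.get ⟨j, by omega⟩) :=
          (P.adj_of_idx j hPj1).symm
        have hadjPw : G.simple.Adj (P.verts.get ⟨j + 1, hPj1⟩) (P.verts.get ⟨j + 2, hP⟩) :=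
          P.adj_of_idx (j + 1) hP
        have hadjQw : G.simple.Adj (P.verts.get ⟨j + 1, hPj1⟩) (Q.verts.get ⟨j + 2, hQ⟩) := by
          rw [hv]; exact Q.adj_of_idx (j + 1) hQ
        have hinjP := List.nodup_iff_injective_get.mp P.nodup
        have hinjQ := List.nodup_iff_injective_get.mp Q.nodup
        have hPwu : P.verts.get ⟨j, by omega⟩ ≠ P.verts.get ⟨j + 2, hP⟩ := by
          intro h
          have : j = j + 2 := congrArg Fin.val (hinjP h)
          omega
        have hQwu : P.verts.get ⟨j, by omega⟩ ≠ Q.verts.get ⟨j + 2, hQ⟩ := by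
          rw [hu]
          intro h
          have : j = j + 2 := congrArg Fin.val (hinjQ h)
          omega
        rcases hdeg _ _ _ _ hadjPu hadjPw hadjQw with h | h | h
        · exact absurd h hPwu
        · exact absurd h hQwu
        · exact h
  apply List.ext_get
  · by_contra hne
    rcases Nat.lt_or_ge P.verts.length Q.verts.length with h | h
    · exact absurd ((key P.verts.length).1.mpr h) (lt_irrefl _)
    · have hlt : Q.verts.length < P.verts.length := by omega
      exact absurd ((key Q.verts.length).1.mp hlt) (lt_irrefl _)
  · intro n h1 h2'
    exact (key n).2 h1 h2'

lemma TPath.edges_eq_of_verts (hmult1 : Function.Injective G.ends)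
    (P Q : TPath G lam s z) (h : P.verts = Q.verts) : P.edges = Q.edges := by
  have hlv : P.verts.length = Q.verts.length := by rw [h]
  have hlen : P.edges.length = Q.edges.length := by
    have := P.len_eq; have := Q.len_eq; omega
  apply List.ext_get hlen
  intro n h1 h2'
  apply hmult1
  rw [P.ends_eq n h1, Q.ends_eq n h2']
  exact congrArg₂ (fun a b => s(a, b)) (list_get_list_congr h _) (list_get_list_congr h _)

lemma TPath.times_eq_of_edges (P Q : TPath G lam s z) (h : P.edges = Q.edges) :
    P.times = Q.times := by
  unfold TPath.times; rw [h]

end CycleHelpers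
section MainHelpers

variable {G : Multigraph} {lam : G.E → ℕ} {s z : G.V}

lemma TPath.second_lt (hsz : s ≠ z) (P : TPath G lam s z) : 1 < P.verts.length := by
  have := P.two_le_length hsz; omega

/-- The second vertex of a temporal path. -/
def TPath.second (hsz : s ≠ z) (P : TPath G lam s z) : G.V :=
  P.verts.get ⟨1, P.second_lt hsz⟩

lemma TPath.adj_second (hsz : s ≠ z) (P : TPath G lam s z) :
    G.simple.Adj s (P.second hsz) := by
  obtain ⟨e, he⟩ := P.adj_of_idx 0 (P.second_lt hsz)
  exact ⟨e, by rw [he]; exact congrArg₂ (fun a b => s(a, b)) P.get_zero rfl⟩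

lemma SnapDisjoint.symm' {P Q : TPath G lam s z} (h : SnapDisjoint P Q) :
    SnapDisjoint Q P := by
  rw [SnapDisjoint, Set.inter_comm]; exact h

lemma deg2_of_cycle {m : ℕ} (φ : G.simple ≃g SimpleGraph.cycleGraph (m + 2)) :
    ∀ v a b c : G.V, G.simple.Adj v a → G.simple.Adj v b → G.simple.Adj v c →
      a = b ∨ a = c ∨ b = c := by
  intro v a b c ha hb hc
  have key : ∀ x, G.simple.Adj v x → φ x = φ v - 1 ∨ φ x = φ v + 1 := by
    intro x hx
    have hmem : φ x ∈ (SimpleGraph.cycleGraph (m + 2)).neighborSet (φ v) :=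
      φ.map_adj_iff.mpr hx
    rw [SimpleGraph.cycleGraph_neighborSet] at hmem
    simpa using hmem
  rcases key a ha with h1 | h1 <;> rcases key b hb with h2 | h2 <;>
    rcases key c hc with h3 | h3 <;>
    first
      | exact Or.inl (φ.injective (h1.trans h2.symm))
      | exact Or.inr (Or.inl (φ.injective (h1.trans h3.symm)))
      | exact Or.inr (Or.inr (φ.injective (h2.trans h3.symm)))

end MainHelpers
/-- every cycle (a multigraph whose underlying simple graph is a cycle and
all of whose multiedges have multiplicity 1) is Mengerian for time. -/
theorem stmt12 (G : Multigraph) (hmult1 : Function.Injective G.ends)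
    (hcycle : ∃ n : ℕ, 3 ≤ n ∧ Nonempty (G.simple ≃g SimpleGraph.cycleGraph n)) :
    Mengerian G := by
  obtain ⟨n, hn3, ⟨φ⟩⟩ := hcycle
  obtain ⟨m, rfl⟩ : ∃ m, n = m + 2 := ⟨n - 2, by omega⟩
  have hdeg := deg2_of_cycle φ
  intro lam hlam s z hsz
  have htimes : ∀ P Q : TPath G lam s z, P.second hsz = Q.second hsz → P.times = Q.times :=
    fun P Q h => TPath.times_eq_of_edges P Q
      (TPath.edges_eq_of_verts hmult1 P Q (TPath.verts_eq_of_second hsz hdeg P Q h))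
  set D : Set ℕ :=
    {k | ∃ f : Fin k → TPath G lam s z, ∀ i j, i ≠ j → SnapDisjoint (f i) (f j)} with hD
  set C : Set ℕ := {h | ∃ S : Finset ℕ, S.card = h ∧ IsSnapCut G lam s z ↑S} with hC
  have hmd : maxD G lam s z = sSup D := rfl
  have hmc : minC G lam s z = sInf C := rfl
  have hDne : D.Nonempty := ⟨0, Fin.elim0, fun i => i.elim0⟩
  have hbdd : BddAbove D := by
    refine ⟨Fintype.card G.E, fun k hk => ?_⟩
    obtain ⟨f, hf⟩ := hk
    choose e he using fun i => List.exists_mem_of_ne_nil _ ((f i).edges_ne_nil hsz)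
    have hinj : Function.Injective e := by
      intro i j hij
      by_contra hne
      exact Set.eq_empty_iff_forall_notMem.mp (hf i j hne) (lam (e i))
        ⟨⟨e i, he i, rfl⟩, ⟨e j, he j, by rw [hij]⟩⟩
    simpa using Fintype.card_le_of_injective e hinj
  have hCne : C.Nonempty := by
    refine ⟨(Finset.image lam Finset.univ).card, Finset.image lam Finset.univ, rfl, ?_⟩
    intro P
    obtain ⟨e, he⟩ := List.exists_mem_of_ne_nil _ (P.edges_ne_nil hsz)
    exact ⟨e, he, by simp⟩
  have hmaxle : maxD G lam s z ≤ minC G lam s z := by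
    obtain ⟨S, hcard, hcut⟩ := Nat.sInf_mem hCne
    rw [hmd, hmc]
    refine csSup_le hDne fun k hk => ?_
    obtain ⟨f, hf⟩ := hk
    choose e he hS using fun i => hcut (f i)
    have hinj : Function.Injective (fun i => (⟨lam (e i), hS i⟩ : {x // x ∈ S})) := by
      intro i j hij
      by_contra hne
      have hl : lam (e i) = lam (e j) := congrArg Subtype.val hij
      exact Set.eq_empty_iff_forall_notMem.mp (hf i j hne) (lam (e i))
        ⟨⟨e i, he i, rfl⟩, ⟨e j, he j, hl.symm⟩⟩
    have := Fintype.card_le_of_injective _ hinj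
    simpa [hcard] using this
  have hminle : minC G lam s z ≤ maxD G lam s z := by
    rw [hmd, hmc]
    by_cases hne : Nonempty (TPath G lam s z)
    · obtain ⟨P⟩ := hne
      have hmem1 : (1 : ℕ) ∈ D :=
        ⟨fun _ => P, fun i j hij => absurd (Subsingleton.elim i j) hij⟩
      have h1 : 1 ≤ sSup D := le_csSup hbdd hmem1
      by_cases hdisj : ∃ Q : TPath G lam s z, SnapDisjoint P Q
      · obtain ⟨Q, hPQ⟩ := hdisj
        obtain ⟨t, ht⟩ := P.times_nonempty hsz
        obtain ⟨u, hu⟩ := Q.times_nonempty hsz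
        have htu : t ≠ u := fun h =>
          Set.eq_empty_iff_forall_notMem.mp hPQ t ⟨ht, h ▸ hu⟩
        have hsec : P.second hsz ≠ Q.second hsz := fun h =>
          Set.eq_empty_iff_forall_notMem.mp hPQ t ⟨ht, (htimes P Q h) ▸ ht⟩
        have hcut2 : IsSnapCut G lam s z ↑({t, u} : Finset ℕ) := by
          intro R
          rcases hdeg s (P.second hsz) (Q.second hsz) (R.second hsz)
            (P.adj_second hsz) (Q.adj_second hsz) (R.adj_second hsz) with h | h | h
          · exact absurd h hsec
          · have hRt : t ∈ R.times := (htimes R P h.symm) ▸ ht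
            obtain ⟨e, heR, hle⟩ := hRt
            exact ⟨e, heR, by simp [hle]⟩
          · have hRu : u ∈ R.times := (htimes R Q h.symm) ▸ hu
            obtain ⟨e, heR, hle⟩ := hRu
            exact ⟨e, heR, by simp [hle]⟩
        have hmC : (2 : ℕ) ∈ C := ⟨{t, u}, Finset.card_pair htu, hcut2⟩
        have hmin2 : sInf C ≤ 2 := Nat.sInf_le hmC
        have hmem2 : (2 : ℕ) ∈ D := by
          refine ⟨![P, Q], ?_⟩
          intro i j hij
          fin_cases i <;> fin_cases j <;>
            first
              | exact absurd rfl hij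
              | exact hPQ
              | exact hPQ.symm'
        have h2 : 2 ≤ sSup D := le_csSup hbdd hmem2
        exact hmin2.trans h2
      · push_neg at hdisj
        by_cases hall : ∀ R : TPath G lam s z, R.times = P.times
        · obtain ⟨t, ht⟩ := P.times_nonempty hsz
          have hcut1 : IsSnapCut G lam s z ↑({t} : Finset ℕ) := by
            intro R
            have hRt : t ∈ R.times := (hall R).symm ▸ ht
            obtain ⟨e, heR, hle⟩ := hRt
            exact ⟨e, heR, by simp [hle]⟩
          have hmC : (1 : ℕ) ∈ C := ⟨{t}, Finset.card_singleton t, hcut1⟩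
          exact (Nat.sInf_le hmC).trans h1
        · push_neg at hall
          obtain ⟨Q, hQ⟩ := hall
          have hnd : ¬ SnapDisjoint P Q := hdisj Q
          obtain ⟨t, htP, htQ⟩ : (P.times ∩ Q.times).Nonempty :=
            Set.nonempty_iff_ne_empty.mpr hnd
          have hsec : P.second hsz ≠ Q.second hsz := fun h =>
            hQ (htimes Q P h.symm)
          have hcut1 : IsSnapCut G lam s z ↑({t} : Finset ℕ) := by
            intro R
            rcases hdeg s (P.second hsz) (Q.second hsz) (R.second hsz)
              (P.adj_second hsz) (Q.adj_second hsz) (R.adj_second hsz) with h | h | h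
            · exact absurd h hsec
            · have hRt : t ∈ R.times := (htimes R P h.symm) ▸ htP
              obtain ⟨e, heR, hle⟩ := hRt
              exact ⟨e, heR, by simp [hle]⟩
            · have hRt : t ∈ R.times := (htimes R Q h.symm) ▸ htQ
              obtain ⟨e, heR, hle⟩ := hRt
              exact ⟨e, heR, by simp [hle]⟩
          have hmC : (1 : ℕ) ∈ C := ⟨{t}, Finset.card_singleton t, hcut1⟩
          exact (Nat.sInf_le hmC).trans h1
    · have hmC : (0 : ℕ) ∈ C := ⟨∅, Finset.card_empty, fun P => (hne ⟨P⟩).elim⟩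
      have : sInf C ≤ 0 := Nat.sInf_le hmC
      omega
  exact le_antisymm hmaxle hminle
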